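/- arXiv:2104.14071 — 5 statements merged into one kernel-verified Lean document; each statement's English description precedes it below -/
import Mathlib

section
/- If a measurable function g: [0,∞) → (0,∞) satisfies g(t + m(t)x)/g(t) → e^{-κx} for every x ∈ ℝ as t → ∞, where κ > 0 and m is a self-neglecting function (i.e., m(t + m(t)x)/m(t) → 1 locally uniformly in x), then the convergence g(t + m(t)x)/g(t) → e^{-κx} holds locally uniformly in x ∈ ℝ. -/
open Filter Topology MeasureTheory Set
open scoped ENNReal

/-- Log version of the pointwise Γ-class hypothesis. -/
lemma rv_aux_hlim (g m : ℝ → ℝ) (κ : ℝ) (hg_pos : ∀ t, 0 < g t)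
    (hg : ∀ x : ℝ, Tendsto (fun t => g (t + m t * x) / g t) atTop (𝓝 (Real.exp (-κ * x)))) :
    ∀ x : ℝ, Tendsto (fun t => Real.log (g (t + m t * x)) - Real.log (g t)) atTop
      (𝓝 (-κ * x)) := by
  intro x
  have hcont : ContinuousAt Real.log (Real.exp (-κ * x)) :=
    Real.continuousAt_log (Real.exp_pos _).ne'
  have h := hcont.tendsto.comp (hg x)
  rw [Real.log_exp] at h
  refine h.congr fun t => ?_
  simp only [Function.comp_apply]
  rw [Real.log_div (hg_pos _).ne' (hg_pos _).ne']

/-- A self-neglecting function satisfies `m(t) = o(t)`. -/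
lemma rv_aux_msmall (m : ℝ → ℝ) (hm_pos : ∀ t, 0 < m t)
    (hm : ∀ K : Set ℝ, IsCompact K →
      TendstoUniformlyOn (fun t x => m (t + m t * x) / m t) (fun _ => 1) atTop K) :
    ∀ c : ℝ, 0 < c → ∀ᶠ t in atTop, m t ≤ c * t := by
  intro c hc
  have hU := hm (Icc (-(1/c)) 0) isCompact_Icc
  rw [Metric.tendstoUniformlyOn_iff] at hU
  have hU2 := hU (1/2) (by norm_num)
  filter_upwards [hU2, eventually_ge_atTop (max 1 (2 * m 0 / c))] with t hUt hge
  by_contra hlt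
  push_neg at hlt
  have ht1 : (1:ℝ) ≤ t := le_trans (le_max_left _ _) hge
  have ht2 : 2 * m 0 / c ≤ t := le_trans (le_max_right _ _) hge
  have hmt : 0 < m t := hm_pos t
  have hy : -(t / m t) ∈ Icc (-(1/c)) 0 := by
    constructor
    · have : t / m t ≤ 1 / c := by
        rw [div_le_div_iff₀ hmt hc]
        nlinarith
      linarith
    · have : 0 < t / m t := div_pos (by linarith) hmt
      linarith
  have hval := hUt _ hy
  have hzero : t + m t * -(t / m t) = 0 := by
    field_simp
    ring
  rw [hzero] at hval
  rw [Real.dist_eq] at hval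
  have hm0 : 0 < m 0 := hm_pos 0
  have h2m0 : 2 * m 0 < m t := by
    have : 2 * m 0 ≤ c * t := by
      rw [div_le_iff₀ hc] at ht2; linarith
    linarith
  have : m 0 / m t < 1 / 2 := by
    rw [div_lt_div_iff₀ hmt (by norm_num : (0:ℝ) < 2)]
    linarith
  have habs : |1 - m 0 / m t| = 1 - m 0 / m t := by
    rw [abs_of_nonneg]
    have : 0 < m 0 / m t := div_pos hm0 hmt
    linarith
  rw [habs] at hval
  linarith

/-- Selection lemma: given two families of measurable functions converging pointwise to 0
(in the eventual sense), one can find a common index `N` such that for all `n ≥ N` and all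
near-identity scalings, a common good point `v` exists. -/
lemma rv_select (F G : ℕ → ℝ → ℝ) (ε' : ℝ) (hε' : 0 < ε') (x₀ : ℝ)
    (hFmeas : ∀ j, Measurable (F j)) (hGmeas : ∀ j, Measurable (G j))
    (hF0 : ∀ v : ℝ, ∃ k : ℕ, ∀ j, k ≤ j → |F j v| ≤ ε')
    (hG0 : ∀ v : ℝ, ∃ k : ℕ, ∀ j, k ≤ j → |G j v| ≤ ε') :
    ∃ N : ℕ, ∀ n, N ≤ n → ∀ ρ xn : ℝ, 9/10 ≤ ρ → ρ ≤ 11/10 → |xn - x₀| < 1/2 →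
      ∃ v, v ∈ Set.Icc (x₀ - 2) (x₀ + 2) ∧ |F n v| ≤ ε' ∧ |G n (ρ * (v - xn))| ≤ ε' := by
  set SA : ℕ → Set ℝ := fun k =>
    Icc (x₀ - 2) (x₀ + 2) ∩ ⋂ (j : ℕ), ⋂ (_ : k ≤ j), {v : ℝ | |F j v| ≤ ε'} with hSAdef
  set SB : ℕ → Set ℝ := fun k =>
    Icc (-3 : ℝ) 3 ∩ ⋂ (j : ℕ), ⋂ (_ : k ≤ j), {w : ℝ | |G j w| ≤ ε'} with hSBdef
  have hSAm : ∀ k, MeasurableSet (SA k) := fun k =>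
    measurableSet_Icc.inter (MeasurableSet.iInter fun j => MeasurableSet.iInter fun _ =>
      measurableSet_le (hFmeas j).abs measurable_const)
  have hSBm : ∀ k, MeasurableSet (SB k) := fun k =>
    measurableSet_Icc.inter (MeasurableSet.iInter fun j => MeasurableSet.iInter fun _ =>
      measurableSet_le (hGmeas j).abs measurable_const)
  have hSAmono : Monotone SA := by
    intro a b hab v hv
    refine ⟨hv.1, ?_⟩
    have h2 := hv.2
    simp only [Set.mem_iInter] at h2 ⊢
    intro j hj
    exact h2 j (hab.trans hj)
  have hSBmono : Monotone SB := by
    intro a b hab v hv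
    refine ⟨hv.1, ?_⟩
    have h2 := hv.2
    simp only [Set.mem_iInter] at h2 ⊢
    intro j hj
    exact h2 j (hab.trans hj)
  have hSAunion : ⋃ k, SA k = Icc (x₀ - 2) (x₀ + 2) := by
    apply subset_antisymm (Set.iUnion_subset fun k => Set.inter_subset_left)
    intro v hv
    obtain ⟨k, hk⟩ := hF0 v
    exact Set.mem_iUnion.2 ⟨k, hv, Set.mem_iInter.2 fun j => Set.mem_iInter.2 fun hj => hk j hj⟩
  have hSBunion : ⋃ k, SB k = Icc (-3 : ℝ) 3 := by
    apply subset_antisymm (Set.iUnion_subset fun k => Set.inter_subset_left)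
    intro v hv
    obtain ⟨k, hk⟩ := hG0 v
    exact Set.mem_iUnion.2 ⟨k, hv, Set.mem_iInter.2 fun j => Set.mem_iInter.2 fun hj => hk j hj⟩
  have hSAvol : Tendsto (fun k => volume (SA k)) atTop (𝓝 (ENNReal.ofReal 4)) := by
    have := tendsto_measure_iUnion_atTop (μ := volume) hSAmono
    rwa [hSAunion, Real.volume_Icc, show x₀ + 2 - (x₀ - 2) = 4 by ring] at this
  have hSBvol : Tendsto (fun k => volume (SB k)) atTop (𝓝 (ENNReal.ofReal 6)) := by
    have := tendsto_measure_iUnion_atTop (μ := volume) hSBmono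
    rwa [hSBunion, Real.volume_Icc, show (3:ℝ) - (-3) = 6 by norm_num] at this
  obtain ⟨N₁, hN₁⟩ := (hSAvol.eventually (eventually_gt_nhds
    (by rw [ENNReal.ofReal_lt_ofReal_iff] <;> norm_num :
      ENNReal.ofReal (7/2) < ENNReal.ofReal 4))).exists
  obtain ⟨N₂, hN₂⟩ := (hSBvol.eventually (eventually_gt_nhds
    (by rw [ENNReal.ofReal_lt_ofReal_iff] <;> norm_num :
      ENNReal.ofReal (11/2) < ENNReal.ofReal 6))).exists
  refine ⟨max N₁ N₂, fun n hnN ρ xn hρlb hρub hx1 => ?_⟩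
  set N : ℕ := max N₁ N₂ with hNdef
  have hPA : ENNReal.ofReal (7/2) < volume (SA N) :=
    lt_of_lt_of_le hN₁ (measure_mono (hSAmono (le_max_left _ _)))
  have hPB : ENNReal.ofReal (11/2) < volume (SB N) :=
    lt_of_lt_of_le hN₂ (measure_mono (hSBmono (le_max_right _ _)))
  have hρpos : (0:ℝ) < ρ := by linarith
  have hρn0 : ρ ≠ 0 := hρpos.ne'
  set T : Set ℝ := (fun v => ρ * (v - xn)) ⁻¹' (SB N) with hTdef
  have hTm : MeasurableSet T :=
    (hSBm N).preimage ((measurable_id.sub_const xn).const_mul ρ)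
  have hTvol : volume T = ENNReal.ofReal ρ⁻¹ * volume (SB N) := by
    have hcomp : (fun v : ℝ => ρ * (v - xn)) = (fun y => ρ * y) ∘ (fun v => v + (-xn)) := by
      funext v; simp [sub_eq_add_neg]
    rw [hTdef, hcomp, Set.preimage_comp, measure_preimage_add_right,
      Real.volume_preimage_mul_left hρn0, abs_of_pos (inv_pos.2 hρpos)]
  have hT_lb : ENNReal.ofReal (5:ℝ) ≤ volume T := by
    rw [hTvol]
    have hinv : (10:ℝ)/11 ≤ ρ⁻¹ := by
      rw [show (10:ℝ)/11 = (11/10)⁻¹ by norm_num]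
      exact inv_anti₀ hρpos hρub
    calc ENNReal.ofReal (5:ℝ) = ENNReal.ofReal (10/11) * ENNReal.ofReal (11/2) := by
          rw [← ENNReal.ofReal_mul (by norm_num)]; norm_num
      _ ≤ ENNReal.ofReal ρ⁻¹ * volume (SB N) :=
          mul_le_mul' (ENNReal.ofReal_le_ofReal hinv) hPB.le
  have hPU : SA N ⊆ Icc (x₀ - 4) (x₀ + 4) := by
    intro v hv
    have h := hv.1
    rw [Set.mem_Icc] at h ⊢
    constructor <;> linarith [h.1, h.2]
  have hTU : T ⊆ Icc (x₀ - 4) (x₀ + 4) := by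
    intro v hv
    have hmem : ρ * (v - xn) ∈ Icc (-3:ℝ) 3 := hv.1
    rw [Set.mem_Icc] at hmem
    have habs : |ρ * (v - xn)| ≤ 3 := abs_le.2 hmem
    rw [abs_mul, abs_of_pos hρpos] at habs
    have hvx : |v - xn| ≤ 10/3 := by nlinarith [abs_nonneg (v - xn)]
    have hxx := abs_lt.1 hx1
    have hvv := abs_le.1 hvx
    rw [Set.mem_Icc]
    constructor <;> nlinarith [hvv.1, hvv.2, hxx.1, hxx.2]
  have hne : (SA N ∩ T).Nonempty := by
    by_contra hemp
    rw [Set.not_nonempty_iff_eq_empty] at hemp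
    have hdisj : Disjoint (SA N) T := Set.disjoint_iff_inter_eq_empty.2 hemp
    have h8 : volume (SA N) + volume T ≤ ENNReal.ofReal 8 := by
      rw [← measure_union hdisj hTm]
      calc volume (SA N ∪ T) ≤ volume (Icc (x₀ - 4) (x₀ + 4)) :=
            measure_mono (Set.union_subset hPU hTU)
        _ = ENNReal.ofReal 8 := by
            rw [Real.volume_Icc, show x₀ + 4 - (x₀ - 4) = 8 by ring]
    have hsum : ENNReal.ofReal (7/2) + ENNReal.ofReal 5 ≤ volume (SA N) + volume T :=
      add_le_add hPA.le hT_lb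
    have hcontr : ENNReal.ofReal (17/2) ≤ ENNReal.ofReal 8 := by
      rw [show (17:ℝ)/2 = 7/2 + 5 by norm_num, ENNReal.ofReal_add (by norm_num) (by norm_num)]
      exact le_trans hsum h8
    rw [ENNReal.ofReal_le_ofReal_iff (by norm_num)] at hcontr
    norm_num at hcontr
  obtain ⟨v, hvA, hvT⟩ := hne
  refine ⟨v, hvA.1, ?_, ?_⟩
  · have h2 := hvA.2
    simp only [Set.mem_iInter] at h2
    exact h2 n hnN
  · have h2 := hvT.2
    simp only [Set.mem_iInter] at h2
    exact h2 n hnN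

/-- Key sequential lemma: along any sequence `t n → ∞` and `x n → x₀`, the log-increments
converge to `-κ x₀`. -/
lemma rv_key (g m : ℝ → ℝ) (κ : ℝ) (hκ : 0 < κ)
    (hg_meas : Measurable g) (hg_pos : ∀ t, 0 < g t) (hm_pos : ∀ t, 0 < m t)
    (hm : ∀ K : Set ℝ, IsCompact K →
      TendstoUniformlyOn (fun t x => m (t + m t * x) / m t) (fun _ => 1) atTop K)
    (hg : ∀ x : ℝ, Tendsto (fun t => g (t + m t * x) / g t) atTop (𝓝 (Real.exp (-κ * x))))
    (t x : ℕ → ℝ) (x₀ : ℝ) (ht : Tendsto t atTop atTop) (hx : Tendsto x atTop (𝓝 x₀)) :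
    Tendsto (fun n => Real.log (g (t n + m (t n) * x n)) - Real.log (g (t n)))
      atTop (𝓝 (-κ * x₀)) := by
  have hlim := rv_aux_hlim g m κ hg_pos hg
  have hxev : ∀ δ : ℝ, 0 < δ → ∀ᶠ n in atTop, |x n - x₀| < δ := by
    intro δ hδ
    have := Metric.tendsto_nhds.1 hx δ hδ
    simpa [Real.dist_eq] using this
  set r : ℕ → ℝ := fun n => t n + m (t n) * x n with hrdef
  -- r n → ∞
  have hrt : Tendsto r atTop atTop := by
    have hc : (0:ℝ) < 1 / (2 * (|x₀| + 1)) := by positivity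
    have hsm := rv_aux_msmall m hm_pos hm _ hc
    have h1 : ∀ᶠ n in atTop, m (t n) ≤ (1 / (2 * (|x₀| + 1))) * t n := ht.eventually hsm
    have h2 : ∀ᶠ n in atTop, |x n| ≤ |x₀| + 1 := by
      filter_upwards [hxev 1 one_pos] with n hn
      have := abs_sub_abs_le_abs_sub (x n) x₀
      linarith
    have h3 : ∀ᶠ n in atTop, (0:ℝ) ≤ t n := ht.eventually (eventually_ge_atTop 0)
    have hhalf : Tendsto (fun n => t n / 2) atTop atTop := ht.atTop_div_const two_pos
    refine tendsto_atTop_mono' atTop ?_ hhalf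
    filter_upwards [h1, h2, h3] with n hn1 hn2 hn3
    have hmn : 0 < m (t n) := hm_pos (t n)
    have hb : m (t n) * |x n| ≤ t n / 2 := by
      have hx0 : (0:ℝ) < |x₀| + 1 := by positivity
      calc m (t n) * |x n| ≤ (1 / (2 * (|x₀| + 1)) * t n) * (|x₀| + 1) := by
            apply mul_le_mul hn1 hn2 (abs_nonneg _)
            positivity
        _ = t n / 2 := by field_simp
    have : -(m (t n) * |x n|) ≤ m (t n) * x n := by
      have := neg_abs_le (x n)
      nlinarith
    show t n / 2 ≤ t n + m (t n) * x n
    linarith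
  -- ratio of m's tends to 1
  have hρ1 : Tendsto (fun n => m (r n) / m (t n)) atTop (𝓝 1) := by
    rw [Metric.tendsto_nhds]
    intro δ hδ
    have hU := hm (Icc (x₀ - 1) (x₀ + 1)) isCompact_Icc
    rw [Metric.tendstoUniformlyOn_iff] at hU
    have h1 := ht.eventually (hU δ hδ)
    filter_upwards [h1, hxev 1 one_pos] with n hn hxn
    have hmem : x n ∈ Icc (x₀ - 1) (x₀ + 1) := by
      have := abs_lt.1 hxn
      constructor <;> [linarith [this.1]; linarith [this.2]]
    have := hn (x n) hmem
    rw [dist_comm] at this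
    exact this
  have hρ : Tendsto (fun n => m (t n) / m (r n)) atTop (𝓝 1) := by
    have h := hρ1.inv₀ one_ne_zero
    rw [inv_one] at h
    refine h.congr fun n => ?_
    rw [inv_div]
  have hρev : ∀ δ : ℝ, 0 < δ → ∀ᶠ n in atTop, |m (t n) / m (r n) - 1| < δ := by
    intro δ hδ
    have := Metric.tendsto_nhds.1 hρ δ hδ
    simpa [Real.dist_eq] using this
  -- main ε-argument
  rw [Metric.tendsto_nhds]
  intro ε hε
  set ε' : ℝ := ε / 8 with hε'def
  have hε' : 0 < ε' := by positivity
  suffices key : ∀ᶠ n in atTop,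
      |(Real.log (g (r n)) - Real.log (g (t n))) - (-κ * x₀)| ≤ 4 * ε' by
    filter_upwards [key] with n hn
    rw [Real.dist_eq]
    calc |Real.log (g (r n)) - Real.log (g (t n)) - (-κ * x₀)| ≤ 4 * ε' := hn
      _ < ε := by rw [hε'def]; linarith
  -- measurability of the two families
  have hmeas_aux : ∀ (s : ℕ → ℝ) (j : ℕ),
      Measurable fun v : ℝ =>
        Real.log (g (s j + m (s j) * v)) - Real.log (g (s j)) + κ * v := by
    intro s j
    apply Measurable.add
    · apply Measurable.sub _ measurable_const
      exact Real.measurable_log.comp (hg_meas.comp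
        (measurable_const.add (measurable_id.const_mul _)))
    · exact measurable_id.const_mul κ
  -- pointwise convergence (eventual smallness)
  have hfill : ∀ (s : ℕ → ℝ), Tendsto s atTop atTop → ∀ v : ℝ,
      ∃ k : ℕ, ∀ j : ℕ, k ≤ j →
        |Real.log (g (s j + m (s j) * v)) - Real.log (g (s j)) + κ * v| ≤ ε' := by
    intro s hs v
    have h1 : Tendsto (fun j => Real.log (g (s j + m (s j) * v)) - Real.log (g (s j)))
        atTop (𝓝 (-κ * v)) := (hlim v).comp hs
    have h2 : Tendsto (fun j => Real.log (g (s j + m (s j) * v)) - Real.log (g (s j)) + κ * v)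
        atTop (𝓝 0) := by
      have := h1.add_const (κ * v)
      simpa using this
    have h3 : ∀ᶠ j in atTop,
        |Real.log (g (s j + m (s j) * v)) - Real.log (g (s j)) + κ * v| ≤ ε' := by
      have := Metric.tendsto_nhds.1 h2 ε' hε'
      filter_upwards [this] with j hj
      rw [Real.dist_eq, sub_zero] at hj
      exact hj.le
    exact eventually_atTop.1 h3
  obtain ⟨N, hN⟩ := rv_select
    (fun j v => Real.log (g (t j + m (t j) * v)) - Real.log (g (t j)) + κ * v)
    (fun j w => Real.log (g (r j + m (r j) * w)) - Real.log (g (r j)) + κ * w)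
    ε' hε' x₀ (hmeas_aux t) (hmeas_aux r) (hfill t ht) (hfill r hrt)
  -- now the eventual estimate
  have hεκ : (0:ℝ) < ε' / κ := by positivity
  have hεκ3 : (0:ℝ) < ε' / (3 * κ) := by positivity
  filter_upwards [eventually_ge_atTop N, hxev (1/2) (by norm_num), hxev (ε'/κ) hεκ,
    hρev (1/10) (by norm_num), hρev (ε'/(3*κ)) hεκ3] with n hnN hx1 hx2 hρa hρb
  set ρn : ℝ := m (t n) / m (r n) with hρndef
  have hρlb : (9:ℝ)/10 ≤ ρn := by
    have := abs_lt.1 hρa; linarith [this.1]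
  have hρub : ρn ≤ 11/10 := by
    have := abs_lt.1 hρa; linarith [this.2]
  have hmrn : (0:ℝ) < m (r n) := hm_pos (r n)
  have hmtn : (0:ℝ) < m (t n) := hm_pos (t n)
  obtain ⟨v, hvIcc, hφv, hψw⟩ := hN n hnN ρn (x n) hρlb hρub hx1
  set w : ℝ := ρn * (v - x n) with hwdef
  -- the key algebraic identity
  have hid : r n + m (r n) * w = t n + m (t n) * v := by
    rw [hwdef, hρndef, hrdef]
    field_simp [(hm_pos (t n + m (t n) * x n)).ne']
    ring
  rw [hid] at hψw
  -- assemble the final estimate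
  rw [Set.mem_Icc] at hvIcc
  have hvxn : |v - x n| ≤ 3 := by
    have := abs_lt.1 hx1
    rw [abs_le]
    constructor <;> nlinarith [hvIcc.1, hvIcc.2, this.1, this.2]
  have hterm : |κ * (w - v + x₀)| ≤ 2 * ε' := by
    have heq : w - v + x₀ = (ρn - 1) * (v - x n) + (x₀ - x n) := by
      rw [hwdef]; ring
    have h1 : |w - v + x₀| ≤ |ρn - 1| * |v - x n| + |x n - x₀| := by
      rw [heq]
      calc |(ρn - 1) * (v - x n) + (x₀ - x n)| ≤ |(ρn - 1) * (v - x n)| + |x₀ - x n| :=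
            abs_add_le _ _
        _ = |ρn - 1| * |v - x n| + |x n - x₀| := by rw [abs_mul, abs_sub_comm x₀ (x n)]
    have h2 : |ρn - 1| * |v - x n| ≤ (ε'/(3*κ)) * 3 :=
      mul_le_mul hρb.le hvxn (abs_nonneg _) hεκ3.le
    have h3 : |x n - x₀| ≤ ε'/κ := hx2.le
    rw [abs_mul, abs_of_pos hκ]
    have h4 : |w - v + x₀| ≤ ε'/(3*κ) * 3 + ε'/κ := by linarith
    calc κ * |w - v + x₀| ≤ κ * (ε'/(3*κ) * 3 + ε'/κ) := by
          apply mul_le_mul_of_nonneg_left h4 hκ.le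
      _ = 2 * ε' := by field_simp; ring
  have hsplit : Real.log (g (r n)) - Real.log (g (t n)) - (-κ * x₀) =
      (Real.log (g (t n + m (t n) * v)) - Real.log (g (t n)) + κ * v) -
      (Real.log (g (t n + m (t n) * v)) - Real.log (g (r n)) + κ * w) +
      κ * (w - v + x₀) := by ring
  rw [hsplit]
  calc |(Real.log (g (t n + m (t n) * v)) - Real.log (g (t n)) + κ * v) -
        (Real.log (g (t n + m (t n) * v)) - Real.log (g (r n)) + κ * w) +
        κ * (w - v + x₀)|
      ≤ |(Real.log (g (t n + m (t n) * v)) - Real.log (g (t n)) + κ * v) -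
        (Real.log (g (t n + m (t n) * v)) - Real.log (g (r n)) + κ * w)| +
        |κ * (w - v + x₀)| := abs_add_le _ _
    _ ≤ (|Real.log (g (t n + m (t n) * v)) - Real.log (g (t n)) + κ * v| +
        |Real.log (g (t n + m (t n) * v)) - Real.log (g (r n)) + κ * w|) +
        |κ * (w - v + x₀)| := by
          gcongr
          exact abs_sub _ _
    _ ≤ (ε' + ε') + 2 * ε' := by
          gcongr
    _ = 4 * ε' := by ring

/-- If `g ∈ Γ_{-κ}(m)` (pointwise) with `m` self-neglecting (locally uniformly),
then the convergence `g(t + m(t)x)/g(t) → e^{-κx}` is locally uniform in `x`. -/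
theorem rapid_variation_stmt0 (g m : ℝ → ℝ) (κ : ℝ) (hκ : 0 < κ)
    (hg_meas : Measurable g) (hg_pos : ∀ t, 0 < g t) (hm_pos : ∀ t, 0 < m t)
    (hm : ∀ K : Set ℝ, IsCompact K →
      TendstoUniformlyOn (fun t x => m (t + m t * x) / m t) (fun _ => 1) atTop K)
    (hg : ∀ x : ℝ, Tendsto (fun t => g (t + m t * x) / g t) atTop (𝓝 (Real.exp (-κ * x)))) :
    ∀ K : Set ℝ, IsCompact K →
      TendstoUniformlyOn (fun t x => g (t + m t * x) / g t)
        (fun x => Real.exp (-κ * x)) atTop K := by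
  intro K hK
  by_contra hcon
  rw [Metric.tendstoUniformlyOn_iff] at hcon
  push_neg at hcon
  obtain ⟨ε, hε, hfreq⟩ := hcon
  have H : ∀ n : ℕ, ∃ s : ℝ, (n:ℝ) ≤ s ∧ ∃ y ∈ K,
      ε ≤ dist (Real.exp (-κ * y)) (g (s + m s * y) / g s) := by
    intro n
    obtain ⟨s, hs, hP⟩ := frequently_atTop.1 hfreq (n:ℝ)
    obtain ⟨y, hy, hyd⟩ := hP
    exact ⟨s, hs, y, hy, hyd⟩
  choose tt h1 yy h2 h3 using H
  have ht : Tendsto tt atTop atTop :=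
    tendsto_atTop_mono h1 tendsto_natCast_atTop_atTop
  obtain ⟨x₀, hx₀K, φ, hφmono, hφtend⟩ := hK.tendsto_subseq h2
  have hkey := rv_key g m κ hκ hg_meas hg_pos hm_pos hm hg (tt ∘ φ) (yy ∘ φ) x₀
    (ht.comp hφmono.tendsto_atTop) hφtend
  have hratio : Tendsto (fun k => g (tt (φ k) + m (tt (φ k)) * yy (φ k)) / g (tt (φ k)))
      atTop (𝓝 (Real.exp (-κ * x₀))) := by
    have h := (Real.continuous_exp.tendsto _).comp hkey
    refine h.congr fun k => ?_
    simp only [Function.comp_apply]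
    rw [Real.exp_sub, Real.exp_log (hg_pos _), Real.exp_log (hg_pos _)]
  have hexp : Tendsto (fun k => Real.exp (-κ * yy (φ k))) atTop (𝓝 (Real.exp (-κ * x₀))) := by
    have h1 : Tendsto (fun k => -κ * yy (φ k)) atTop (𝓝 (-κ * x₀)) := hφtend.const_mul (-κ)
    exact (Real.continuous_exp.tendsto _).comp h1
  have hdist : Tendsto (fun k => dist (Real.exp (-κ * yy (φ k)))
      (g (tt (φ k) + m (tt (φ k)) * yy (φ k)) / g (tt (φ k)))) atTop (𝓝 0) := by
    have := hexp.dist hratio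
    simpa using this
  have : ε ≤ 0 := ge_of_tendsto hdist (Eventually.of_forall fun k => h3 (φ k))
  linarith
end

section
/- Let m be a continuous, positive, self-neglecting function with differentiable representative whose derivative tends to 0. Then for each fixed x ∈ ℝ, m(t + m(t)x)/m(t) → 1 as t → ∞, and this convergence is locally uniform in x (Bloom's theorem). -/
open Filter Topology

/-- Bloom's theorem: if `m` is continuous, positive, with a derivative tending to `0`
(and `m(t)/t → 0`), then `m(t + m(t)x)/m(t) → 1` for each `x`, and the convergence
is locally uniform in `x`. -/
theorem rapid_variation_stmt1 (m m' : ℝ → ℝ)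
    (hm_cont : Continuous m) (hm_pos : ∀ t, 0 < m t)
    (hm_deriv : ∀ t, HasDerivAt m (m' t) t)
    (hm_d0 : Tendsto m' atTop (𝓝 0))
    (hm_small : Tendsto (fun t => m t / t) atTop (𝓝 0)) :
    (∀ x : ℝ, Tendsto (fun t => m (t + m t * x) / m t) atTop (𝓝 1)) ∧
    (∀ K : Set ℝ, IsCompact K →
      TendstoUniformlyOn (fun t x => m (t + m t * x) / m t) (fun _ => 1) atTop K) := by
  have key : ∀ K : Set ℝ, IsCompact K →
      TendstoUniformlyOn (fun t x => m (t + m t * x) / m t) (fun _ => 1) atTop K := by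
    intro K hK
    obtain ⟨R, hR0, hRK⟩ := hK.isBounded.subset_closedBall_lt 0 0
    rw [Metric.tendstoUniformlyOn_iff]
    intro ε hε
    set ε' := ε / (2 * R) with hε'def
    have hε' : 0 < ε' := div_pos hε (by linarith)
    have h1 : ∀ᶠ s in atTop, |m' s| < ε' := by
      have := Metric.tendsto_nhds.mp hm_d0 ε' hε'
      filter_upwards [this] with s hs
      simpa [Real.dist_eq] using hs
    have h2 : ∀ᶠ t in atTop, m t / t < 1 / (2 * R) := by
      have := Metric.tendsto_nhds.mp hm_small (1 / (2 * R)) (by positivity)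
      filter_upwards [this, eventually_gt_atTop 0] with t ht ht0
      rw [Real.dist_eq, sub_zero, abs_of_pos (div_pos (hm_pos t) ht0)] at ht
      exact ht
    obtain ⟨T₀, hT₀⟩ := h1.exists_forall_of_atTop
    filter_upwards [eventually_ge_atTop (2 * T₀), eventually_gt_atTop 0, h2]
      with t ht2 ht0 htsmall
    intro x hx
    have hxR : |x| ≤ R := by simpa [Real.dist_eq] using hRK hx
    have hmt := hm_pos t
    have hmtx : |m t * x| ≤ t / 2 := by
      have h3 : m t < t / (2 * R) := by
        calc m t = m t / t * t := by field_simp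
        _ < 1 / (2 * R) * t := by exact mul_lt_mul_of_pos_right htsmall ht0
        _ = t / (2 * R) := by ring
      calc |m t * x| = m t * |x| := by rw [abs_mul, abs_of_pos hmt]
      _ ≤ m t * R := mul_le_mul_of_nonneg_left hxR hmt.le
      _ ≤ t / (2 * R) * R := mul_le_mul_of_nonneg_right h3.le hR0.le
      _ = t / 2 := by field_simp
    -- both endpoints in Ici T₀
    have hmem1 : t ∈ Set.Ici T₀ := by
      simp only [Set.mem_Ici]; linarith
    have hmem2 : t + m t * x ∈ Set.Ici T₀ := by
      simp only [Set.mem_Ici]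
      have := abs_le.mp hmtx
      linarith
    have hmvt : ‖m (t + m t * x) - m t‖ ≤ ε' * ‖(t + m t * x) - t‖ := by
      apply Convex.norm_image_sub_le_of_norm_hasDerivWithin_le
        (f' := m') (fun y _ => (hm_deriv y).hasDerivWithinAt)
        (fun y hy => by simpa [Real.norm_eq_abs] using (hT₀ y hy).le)
        (convex_Ici T₀) hmem1 hmem2
    have hbound : |m (t + m t * x) - m t| ≤ ε' * (m t * R) := by
      rw [Real.norm_eq_abs, Real.norm_eq_abs] at hmvt
      calc |m (t + m t * x) - m t| ≤ ε' * |t + m t * x - t| := hmvt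
      _ = ε' * |m t * x| := by ring_nf
      _ ≤ ε' * (m t * R) := by
          apply mul_le_mul_of_nonneg_left _ hε'.le
          calc |m t * x| = m t * |x| := by rw [abs_mul, abs_of_pos hmt]
          _ ≤ m t * R := mul_le_mul_of_nonneg_left hxR hmt.le
    have : dist (1 : ℝ) (m (t + m t * x) / m t) ≤ ε / 2 := by
      rw [Real.dist_eq]
      have : 1 - m (t + m t * x) / m t = (m t - m (t + m t * x)) / m t := by
        field_simp
      rw [this, abs_div, abs_of_pos hmt, abs_sub_comm]
      rw [div_le_iff₀ hmt]
      calc |m (t + m t * x) - m t| ≤ ε' * (m t * R) := hbound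
      _ = ε / 2 * m t := by rw [hε'def]; field_simp
    linarith
  exact ⟨fun x => (key {x} isCompact_singleton).tendsto_at (Set.mem_singleton x), key⟩
end

section
/- If a continuous density f on ℝ satisfies f(t + m(t)x) ~ f(t)e^{-x} as t → ∞ for all x ∈ ℝ, where m is self-neglecting, differentiable with derivative tending to 0, then the survival function F̄(t) = ∫_t^∞ f(s) ds satisfies F̄(t + m(t)x) ~ F̄(t)e^{-x} locally uniformly in x ∈ ℝ as t → ∞. -/
open Filter Topology MeasureTheory

/-- Pólya-type lemma: antitone functions converging pointwise to a continuous limit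
converge uniformly on compact sets. -/
private lemma polya_aux {g : ℝ → ℝ → ℝ} {G : ℝ → ℝ} (hmono : ∀ t, Antitone (g t))
    (hG : Continuous G) (hpt : ∀ x, Tendsto (fun t => g t x) atTop (𝓝 (G x)))
    (K : Set ℝ) (hK : IsCompact K) : TendstoUniformlyOn g G atTop K := by
  rw [Metric.tendstoUniformlyOn_iff]
  intro ε hε
  have hδ : ∀ x : ℝ, ∃ δ > 0, ∀ y, |y - x| < δ → |G y - G x| < ε / 3 := by
    intro x
    obtain ⟨δ, hδpos, h⟩ := Metric.continuousAt_iff.mp hG.continuousAt (ε / 3) (by linarith)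
    exact ⟨δ, hδpos, fun y hy => h (by rwa [Real.dist_eq])⟩
  choose δ hδpos hδ using hδ
  obtain ⟨s, hsK, hcover⟩ := hK.elim_nhds_subcover (fun x => Metric.ball x (δ x / 2))
    (fun x _ => Metric.ball_mem_nhds x (by have := hδpos x; positivity))
  have hev : ∀ᶠ t in atTop, ∀ x ∈ s,
      |g t (x - δ x / 2) - G (x - δ x / 2)| < ε / 3 ∧
      |g t (x + δ x / 2) - G (x + δ x / 2)| < ε / 3 := by
    rw [eventually_all_finset]
    intro x _
    have h1 := Metric.tendsto_nhds.mp (hpt (x - δ x / 2)) (ε / 3) (by linarith)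
    have h2 := Metric.tendsto_nhds.mp (hpt (x + δ x / 2)) (ε / 3) (by linarith)
    filter_upwards [h1, h2] with t ht1 ht2
    rw [Real.dist_eq] at ht1 ht2
    exact ⟨ht1, ht2⟩
  filter_upwards [hev] with t ht y hy
  obtain ⟨i, his, hyi⟩ := Set.mem_iUnion₂.mp (hcover hy)
  rw [Metric.mem_ball, Real.dist_eq] at hyi
  have hdi := hδpos i
  obtain ⟨h1, h2⟩ := ht i his
  have hGi1 : |G (i - δ i / 2) - G i| < ε / 3 := by
    apply hδ i
    rw [show i - δ i / 2 - i = -(δ i / 2) by ring, abs_neg, abs_of_pos (by positivity)]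
    linarith
  have hGi2 : |G (i + δ i / 2) - G i| < ε / 3 := by
    apply hδ i
    rw [show i + δ i / 2 - i = δ i / 2 by ring, abs_of_pos (by positivity)]
    linarith
  have hGy : |G y - G i| < ε / 3 := hδ i y (by linarith [abs_lt.mp hyi])
  have hy1 : i - δ i / 2 ≤ y := by linarith [(abs_lt.mp hyi).1]
  have hy2 : y ≤ i + δ i / 2 := by linarith [(abs_lt.mp hyi).2]
  have hm1 : g t y ≤ g t (i - δ i / 2) := hmono t hy1
  have hm2 : g t (i + δ i / 2) ≤ g t y := hmono t hy2
  rw [Real.dist_eq, abs_sub_lt_iff]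
  obtain ⟨h1a, h1b⟩ := abs_sub_lt_iff.mp h1
  obtain ⟨h2a, h2b⟩ := abs_sub_lt_iff.mp h2
  obtain ⟨hGi1a, hGi1b⟩ := abs_sub_lt_iff.mp hGi1
  obtain ⟨hGi2a, hGi2b⟩ := abs_sub_lt_iff.mp hGi2
  obtain ⟨hGya, hGyb⟩ := abs_sub_lt_iff.mp hGy
  constructor <;> linarith

/-- If a continuous probability density `f` satisfies `f(t + m(t)x) ~ f(t)e^{-x}` for all `x`,
with `m` self-neglecting and differentiable with derivative tending to `0`, then the survival
function `F̄(t) = ∫_t^∞ f` satisfies `F̄(t + m(t)x) ~ F̄(t)e^{-x}` locally uniformly in `x`. -/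
theorem rapid_variation_stmt2 (f m m' : ℝ → ℝ)
    (hf_cont : Continuous f) (hf_nonneg : ∀ t, 0 ≤ f t)
    (hf_int : Integrable f) (hf_dens : ∫ s, f s = 1)
    (hm_pos : ∀ t, 0 < m t)
    (hm_deriv : ∀ t, HasDerivAt m (m' t) t)
    (hm_d0 : Tendsto m' atTop (𝓝 0))
    (hm_sn : ∀ K : Set ℝ, IsCompact K →
      TendstoUniformlyOn (fun t x => m (t + m t * x) / m t) (fun _ => 1) atTop K)
    (hf_gamma : ∀ x : ℝ, Tendsto (fun t => f (t + m t * x) / f t) atTop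
        (𝓝 (Real.exp (-x)))) :
    ∀ K : Set ℝ, IsCompact K →
      TendstoUniformlyOn
        (fun t x => (∫ s in Set.Ioi (t + m t * x), f s) / (∫ s in Set.Ioi t, f s))
        (fun x => Real.exp (-x)) atTop K := by
  set F : ℝ → ℝ := fun t => ∫ s in Set.Ioi t, f s with hF
  -- Representation of F via interval integrals
  have hrepr : ∀ t, F t = F 0 - ∫ s in (0:ℝ)..t, f s := by
    intro t
    have h1 := intervalIntegral.integral_Iic_add_Ioi (b := t) hf_int.integrableOn hf_int.integrableOn
    have h2 := intervalIntegral.integral_Iic_add_Ioi (b := (0:ℝ)) hf_int.integrableOn hf_int.integrableOn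
    have h3 := intervalIntegral.integral_Iic_sub_Iic (a := (0:ℝ)) (b := t)
      hf_int.integrableOn hf_int.integrableOn
    simp only [hF]
    linarith
  -- F has derivative -f
  have hFderiv : ∀ t, HasDerivAt F (-(f t)) t := by
    intro t
    have h : HasDerivAt (fun u => ∫ s in (0:ℝ)..u, f s) (f t) t :=
      intervalIntegral.integral_hasDerivAt_right (hf_int.intervalIntegrable)
        (hf_cont.stronglyMeasurableAtFilter _ _) hf_cont.continuousAt
    have h2 : HasDerivAt (fun u => F 0 - ∫ s in (0:ℝ)..u, f s) (-(f t)) t := h.const_sub (F 0)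
    exact h2.congr_of_eventuallyEq (Filter.Eventually.of_forall hrepr)
  -- F tends to 0 at infinity
  have hFto0 : Tendsto F atTop (𝓝 0) := by
    have h := MeasureTheory.intervalIntegral_tendsto_integral_Ioi 0 hf_int.integrableOn tendsto_id
    have h2 : Tendsto F atTop (𝓝 (F 0 - F 0)) := by
      apply Tendsto.congr (fun t => (hrepr t).symm)
      exact tendsto_const_nhds.sub h
    simpa using h2
  -- f is eventually positive
  have hfpos : ∀ᶠ t in atTop, 0 < f t := by
    have h0 := hf_gamma 0
    simp only [mul_zero, add_zero, neg_zero, Real.exp_zero] at h0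
    have h1 := h0.eventually (eventually_gt_nhds (show (1:ℝ)/2 < 1 by norm_num))
    filter_upwards [h1] with t ht
    by_contra h
    push_neg at h
    have : f t = 0 := le_antisymm h (hf_nonneg t)
    rw [this] at ht
    norm_num at ht
  -- t + m t * x tends to infinity
  have htends : ∀ x : ℝ, Tendsto (fun t => t + m t * x) atTop atTop := by
    intro x
    set c : ℝ := 1 / (2 * (|x| + 1)) with hc
    have hcpos : 0 < c := by positivity
    obtain ⟨t0, ht0⟩ := (eventually_atTop).mp
      (Metric.tendsto_nhds.mp hm_d0 c hcpos)
    have hmc : Continuous m := continuous_iff_continuousAt.mpr fun t => (hm_deriv t).continuousAt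
    have hanti : AntitoneOn (fun s => m s - c * s) (Set.Ici t0) := by
      apply antitoneOn_of_deriv_nonpos (convex_Ici t0)
      · exact (hmc.sub (continuous_const.mul continuous_id)).continuousOn
      · intro s hs
        exact ((hm_deriv s).sub ((hasDerivAt_id s).const_mul c)).differentiableAt.differentiableWithinAt
      · intro s hs
        rw [interior_Ici] at hs
        have hds : HasDerivAt (fun s => m s - c * s) (m' s - c * 1) s :=
          (hm_deriv s).sub ((hasDerivAt_id s).const_mul c)
        rw [hds.deriv]
        have := ht0 s (le_of_lt hs)
        rw [Real.dist_eq, sub_zero] at this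
        have := (abs_lt.mp this).2
        linarith
    set C : ℝ := m t0 - c * t0 with hC
    have hbound : ∀ t, max t0 0 ≤ t → t / 2 - |x| * C ≤ t + m t * x := by
      intro t htt
      have ht0t : t0 ≤ t := le_trans (le_max_left _ _) htt
      have ht00 : (0:ℝ) ≤ t := le_trans (le_max_right _ _) htt
      have h1 : m t - c * t ≤ C := hanti (Set.self_mem_Ici) ht0t ht0t
      have h2 : -(m t * |x|) ≤ m t * x := by
        have := mul_le_mul_of_nonneg_left (neg_abs_le x) (le_of_lt (hm_pos t))
        simpa [mul_neg] using this
      have h3 : |x| * c ≤ 1 / 2 := by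
        rw [hc, mul_one_div, div_le_div_iff₀ (by positivity) (by norm_num)]
        nlinarith [abs_nonneg x]
      nlinarith [abs_nonneg x, hm_pos t, mul_le_mul_of_nonneg_right h1 (abs_nonneg x),
        mul_le_mul_of_nonneg_right h3 ht00]
    apply tendsto_atTop_mono' atTop (eventually_atTop.mpr ⟨max t0 0, hbound⟩)
    apply tendsto_atTop_add_const_right
    exact (tendsto_id.atTop_div_const (by norm_num : (0:ℝ) < 2))
  -- pointwise convergence of the survival ratio
  have hpt : ∀ x : ℝ, Tendsto (fun t => F (t + m t * x) / F t) atTop (𝓝 (Real.exp (-x))) := by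
    intro x
    apply HasDerivAt.lhopital_zero_atTop
      (f' := fun t => -(f (t + m t * x)) * (1 + m' t * x)) (g' := fun t => -(f t))
    · apply Filter.Eventually.of_forall
      intro t
      have hinner : HasDerivAt (fun t => t + m t * x) (1 + m' t * x) t :=
        (hasDerivAt_id t).add ((hm_deriv t).mul_const x)
      exact (hFderiv (t + m t * x)).comp t hinner
    · exact Filter.Eventually.of_forall fun t => hFderiv t
    · filter_upwards [hfpos] with t ht
      exact neg_ne_zero.mpr (ne_of_gt ht)
    · exact hFto0.comp (htends x)
    · exact hFto0
    · have heq : (fun t => (-(f (t + m t * x)) * (1 + m' t * x)) / -(f t)) =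
          fun t => f (t + m t * x) / f t * (1 + m' t * x) := by
        funext t
        rw [neg_mul, neg_div_neg_eq, mul_div_right_comm]
      rw [heq]
      have h2 : Tendsto (fun t => 1 + m' t * x) atTop (𝓝 1) := by
        have := (hm_d0.mul_const x)
        rw [zero_mul] at this
        simpa using tendsto_const_nhds.add this
      simpa using (hf_gamma x).mul h2
  -- antitonicity in x
  have hanti : ∀ t, Antitone (fun x => F (t + m t * x) / F t) := by
    intro t a b hab
    have hsub : Set.Ioi (t + m t * b) ⊆ Set.Ioi (t + m t * a) := by
      apply Set.Ioi_subset_Ioi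
      have := mul_le_mul_of_nonneg_left hab (le_of_lt (hm_pos t))
      linarith
    have hFle : F (t + m t * b) ≤ F (t + m t * a) := by
      apply MeasureTheory.setIntegral_mono_set hf_int.integrableOn
        (Filter.Eventually.of_forall hf_nonneg) (HasSubset.Subset.eventuallyLE hsub)
    have hFt : 0 ≤ F t :=
      MeasureTheory.setIntegral_nonneg measurableSet_Ioi (fun s _ => hf_nonneg s)
    simp only [div_eq_mul_inv]
    exact mul_le_mul_of_nonneg_right hFle (inv_nonneg.mpr hFt)
  intro K hK
  exact polya_aux hanti (Real.continuous_exp.comp continuous_neg) hpt K hK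
end

section
/- If the limit defining the upper tail density of a copula, c(1 − u w₁, …, 1 − u w_d)/(u^{κ_U − d} ℓ(u)) → λ_U(w; κ_U), holds locally uniformly for w in the box ∏_{i=1}^d (0, a_i] with a_i > 0, then it holds locally uniformly for all w ∈ (0,∞)^d. -/
open Filter Topology

set_option maxHeartbeats 1000000 in
/-- If the copula upper tail density limit holds locally uniformly on a box
`∏ (0, aᵢ]`, then it holds locally uniformly on all of `(0,∞)^d`. -/
theorem rapid_variation_stmt7 (d : ℕ) (c : (Fin d → ℝ) → ℝ) (ℓ : ℝ → ℝ)
    (κ : ℝ) (hκ : 1 ≤ κ)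
    (a : Fin d → ℝ) (ha : ∀ i, 0 < a i)
    (lamU : (Fin d → ℝ) → ℝ)
    (hscale : ∀ t > 0, ∀ w : Fin d → ℝ, (∀ i, 0 < w i) →
      lamU (t • w) = t ^ (κ - (d:ℝ)) * lamU w)
    (hℓ_pos : ∀ u > 0, 0 < ℓ u)
    (hℓ : ∀ K : Set ℝ, IsCompact K → K ⊆ Set.Ioi 0 →
      TendstoUniformlyOn (fun u x => ℓ (u * x) / ℓ u) (fun _ => 1) (𝓝[>] (0:ℝ)) K)
    (hbox : ∀ K : Set (Fin d → ℝ), IsCompact K →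
      K ⊆ {w | ∀ i, 0 < w i ∧ w i ≤ a i} →
      TendstoUniformlyOn
        (fun u w => c (fun i => 1 - u * w i) / (u ^ (κ - (d:ℝ)) * ℓ u))
        lamU (𝓝[>] (0:ℝ)) K) :
    ∀ K : Set (Fin d → ℝ), IsCompact K → K ⊆ {w | ∀ i, 0 < w i} →
      TendstoUniformlyOn
        (fun u w => c (fun i => 1 - u * w i) / (u ^ (κ - (d:ℝ)) * ℓ u))
        lamU (𝓝[>] (0:ℝ)) K := by
  intro K hK hKpos
  by_cases hd : d = 0
  · subst hd
    exact hbox K hK (fun w _ i => i.elim0)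
  -- setup: positive lower bound on a, upper bound on K
  haveI : Nonempty (Fin d) := Fin.pos_iff_nonempty.mp (Nat.pos_of_ne_zero hd)
  set α : ℝ := Finset.univ.inf' Finset.univ_nonempty a with hαdef
  have hα : 0 < α := (Finset.lt_inf'_iff _).mpr fun i _ => ha i
  obtain ⟨r, hr⟩ := hK.isBounded.subset_closedBall 0
  set M : ℝ := max r 1 with hMdef
  have hM0 : (0:ℝ) < M := lt_of_lt_of_le one_pos (le_max_right _ _)
  have hM : ∀ w ∈ K, ∀ i, w i ≤ M := by
    intro w hw i
    have h1 : ‖w‖ ≤ r := by simpa using hr hw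
    have h2 : ‖w i‖ ≤ ‖w‖ := norm_le_pi_norm w i
    have := le_abs_self (w i)
    rw [Real.norm_eq_abs] at h2
    linarith [le_max_left r 1]
  set s : ℝ := min 1 (α / M) with hsdef
  have hs : 0 < s := lt_min one_pos (div_pos hα hM0)
  have hs1 : s ≤ 1 := min_le_left _ _
  have hkey : ∀ w ∈ K, ∀ i, s * w i ≤ a i := by
    intro w hw i
    calc s * w i ≤ (α / M) * w i :=
          mul_le_mul_of_nonneg_right (min_le_right _ _) (hKpos hw i).le
      _ ≤ (α / M) * M :=
          mul_le_mul_of_nonneg_left (hM w hw i) (div_pos hα hM0).le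
      _ = α := div_mul_cancel₀ _ hM0.ne'
      _ ≤ a i := Finset.inf'_le _ (Finset.mem_univ i)
  set K1 : Set (Fin d → ℝ) := (fun w => s • w) '' K with hK1def
  set K2 : Set (Fin d → ℝ) := (fun w => s • w) '' K1 with hK2def
  have hK1c : IsCompact K1 := hK.image (continuous_const_smul s)
  have hK2c : IsCompact K2 := hK1c.image (continuous_const_smul s)
  have hK1sub : K1 ⊆ {w | ∀ i, 0 < w i ∧ w i ≤ a i} := by
    rintro _ ⟨w, hw, rfl⟩ i
    simp only [Pi.smul_apply, smul_eq_mul]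
    exact ⟨mul_pos hs (hKpos hw i), hkey w hw i⟩
  have hK2sub : K2 ⊆ {w | ∀ i, 0 < w i ∧ w i ≤ a i} := by
    rintro _ ⟨w1, hw1, rfl⟩ i
    obtain ⟨hpos, hle⟩ := hK1sub hw1 i
    simp only [Pi.smul_apply, smul_eq_mul]
    refine ⟨mul_pos hs hpos, ?_⟩
    calc s * w1 i ≤ 1 * w1 i := mul_le_mul_of_nonneg_right hs1 hpos.le
      _ = w1 i := one_mul _
      _ ≤ a i := hle
  -- constants
  set P : ℝ := s ^ (κ - (d:ℝ)) with hPdef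
  have hP : 0 < P := Real.rpow_pos_of_pos hs _
  set C : ℝ := P⁻¹ with hCdef
  have hC : 0 < C := inv_pos.mpr hP
  have hCP : C * P = 1 := inv_mul_cancel₀ hP.ne'
  -- the map u ↦ u / s
  have hmap : Tendsto (fun u : ℝ => u / s) (𝓝[>] (0:ℝ)) (𝓝[>] (0:ℝ)) := by
    apply tendsto_nhdsWithin_of_tendsto_nhds_of_eventually_within
    · have h : Tendsto (fun u : ℝ => u / s) (𝓝 (0:ℝ)) (𝓝 ((0:ℝ) / s)) :=
        tendsto_id.div_const s
      simpa using h.mono_left nhdsWithin_le_nhds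
    · filter_upwards [self_mem_nhdsWithin] with u hu
      exact div_pos hu hs
  -- uniform convergence statements
  rw [Metric.tendstoUniformlyOn_iff]
  intro ε hε
  have hQ : (0:ℝ) < C * (3 + 2 * C) + 1 := by positivity
  set δ : ℝ := ε / (C * (3 + 2 * C) + 1) with hδdef
  have hδ : 0 < δ := div_pos hε hQ
  have TU1 := hbox K1 hK1c hK1sub
  have TU2 := hbox K2 hK2c hK2sub
  rw [Metric.tendstoUniformlyOn_iff] at TU1 TU2
  have TUℓ := hℓ {1 / s} isCompact_singleton (by
    intro x hx; rw [Set.mem_singleton_iff] at hx; subst hx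
    exact one_div_pos.mpr hs)
  rw [Metric.tendstoUniformlyOn_iff] at TUℓ
  have h1 := hmap.eventually (TU1 δ hδ)
  have h2 := hmap.eventually (TU2 δ hδ)
  have h3 := TU1 δ hδ
  have hB := TUℓ 1 one_pos
  filter_upwards [h1, h2, h3, hB, self_mem_nhdsWithin] with u hu1 hu2 hu3 huB hu0
  intro w hw
  have hu : (0:ℝ) < u := hu0
  have hus : 0 < u / s := div_pos hu hs
  have hLu : 0 < ℓ u := hℓ_pos u hu
  have hLus : 0 < ℓ (u / s) := hℓ_pos _ hus
  set B : ℝ := ℓ (u / s) / ℓ u with hBdef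
  have huB' : |B - 1| < 1 := by
    have := huB (1 / s) rfl
    rw [Real.dist_eq] at this
    rw [mul_one_div] at this
    rw [abs_sub_comm]
    simpa [hBdef] using this
  have hBabs : |B| < 2 := by
    calc |B| = |(B - 1) + 1| := by ring_nf
      _ ≤ |B - 1| + |1| := abs_add_le _ _
      _ < 2 := by rw [abs_one]; linarith
  -- the key algebraic identity
  have ident : ∀ v : Fin d → ℝ,
      c (fun i => 1 - u * v i) / (u ^ (κ - (d:ℝ)) * ℓ u)
        = C * (c (fun i => 1 - (u / s) * (s • v) i) /
            ((u / s) ^ (κ - (d:ℝ)) * ℓ (u / s))) * B := by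
    intro v
    have harg : (fun i => 1 - (u / s) * (s • v) i) = fun i => 1 - u * v i := by
      funext i
      simp only [Pi.smul_apply, smul_eq_mul]
      field_simp
    rw [harg]
    have hrpow : (u / s) ^ (κ - (d:ℝ)) = u ^ (κ - (d:ℝ)) / P :=
      Real.div_rpow hu.le hs.le _
    rw [hrpow, hBdef, hCdef]
    have hA : (0:ℝ) < u ^ (κ - (d:ℝ)) := Real.rpow_pos_of_pos hu _
    field_simp
  -- memberships
  have hw1 : s • w ∈ K1 := ⟨w, hw, rfl⟩
  have hw2 : s • (s • w) ∈ K2 := ⟨s • w, hw1, rfl⟩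
  have hwpos : ∀ i, 0 < w i := hKpos hw
  have hw1pos : ∀ i, 0 < (s • w) i := fun i => by
    simp only [Pi.smul_apply, smul_eq_mul]; exact mul_pos hs (hwpos i)
  -- scaling
  have hE3 : lamU (s • w) = P * lamU w := hscale s hs w hwpos
  have hE4 : lamU (s • (s • w)) = P * lamU (s • w) := hscale s hs _ hw1pos
  have hE3' : C * lamU (s • w) = lamU w := by
    rw [hE3, ← mul_assoc, hCP, one_mul]
  have hE4' : C * lamU (s • (s • w)) = lamU (s • w) := by
    rw [hE4, ← mul_assoc, hCP, one_mul]
  -- abbreviations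
  set g1 : ℝ := c (fun i => 1 - (u / s) * (s • w) i) /
      ((u / s) ^ (κ - (d:ℝ)) * ℓ (u / s)) with hg1def
  set g2 : ℝ := c (fun i => 1 - (u / s) * (s • (s • w)) i) /
      ((u / s) ^ (κ - (d:ℝ)) * ℓ (u / s)) with hg2def
  have hE1 : c (fun i => 1 - u * w i) / (u ^ (κ - (d:ℝ)) * ℓ u) = C * g1 * B :=
    ident w
  have hE2 : c (fun i => 1 - u * (s • w) i) / (u ^ (κ - (d:ℝ)) * ℓ u)
      = C * g2 * B := ident (s • w)
  -- error bounds from uniform convergence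
  have hx1 : |g1 - lamU (s • w)| < δ := by
    have := hu1 (s • w) hw1
    rw [Real.dist_eq, abs_sub_comm] at this
    exact this
  have hx2 : |lamU (s • (s • w)) - g2| < δ := by
    have := hu2 (s • (s • w)) hw2
    rw [Real.dist_eq] at this
    exact this
  have hx3 : |c (fun i => 1 - u * (s • w) i) / (u ^ (κ - (d:ℝ)) * ℓ u)
      - lamU (s • w)| < δ := by
    have := hu3 (s • w) hw1
    rw [Real.dist_eq, abs_sub_comm] at this
    exact this
  rw [hE2] at hx3
  -- the key decomposition
  have key : c (fun i => 1 - u * w i) / (u ^ (κ - (d:ℝ)) * ℓ u) - lamU w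
      = C * ((g1 - lamU (s • w)) * B)
        + C * (C * ((lamU (s • (s • w)) - g2) * B))
        + C * (C * g2 * B - lamU (s • w)) := by
    linear_combination hE1 + hE3' - C * B * hE4'
  rw [Real.dist_eq, abs_sub_comm, key]
  have habs : |C * ((g1 - lamU (s • w)) * B)
        + C * (C * ((lamU (s • (s • w)) - g2) * B))
        + C * (C * g2 * B - lamU (s • w))|
      ≤ C * (|g1 - lamU (s • w)| * |B|)
        + C * (C * (|lamU (s • (s • w)) - g2| * |B|))
        + C * |C * g2 * B - lamU (s • w)| := by
    calc |C * ((g1 - lamU (s • w)) * B)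
          + C * (C * ((lamU (s • (s • w)) - g2) * B))
          + C * (C * g2 * B - lamU (s • w))|
        ≤ |C * ((g1 - lamU (s • w)) * B)|
          + |C * (C * ((lamU (s • (s • w)) - g2) * B))|
          + |C * (C * g2 * B - lamU (s • w))| := abs_add_three _ _ _
      _ = C * (|g1 - lamU (s • w)| * |B|)
          + C * (C * (|lamU (s • (s • w)) - g2| * |B|))
          + C * |C * g2 * B - lamU (s • w)| := by
          simp [abs_mul, abs_of_pos hC]
  have hfin : C * (|g1 - lamU (s • w)| * |B|)
        + C * (C * (|lamU (s • (s • w)) - g2| * |B|))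
        + C * |C * g2 * B - lamU (s • w)| < ε := by
    have hδε : δ * (C * (3 + 2 * C) + 1) = ε := by
      rw [hδdef]; field_simp
    have step : C * (|g1 - lamU (s • w)| * |B|)
        + C * (C * (|lamU (s • (s • w)) - g2| * |B|))
        + C * |C * g2 * B - lamU (s • w)|
        ≤ C * (δ * 2) + C * (C * (δ * 2)) + C * δ := by
      gcongr <;> first
        | exact hx1.le | exact hx2.le | exact hx3.le | exact hBabs.le
        | positivity
    have final : C * (δ * 2) + C * (C * (δ * 2)) + C * δ < ε := by
      nlinarith [hδε, hδ]
    exact lt_of_le_of_lt step final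
  exact lt_of_le_of_lt habs hfin
end

section
/- Let V(t) = F̄₁(t)·[ℓ(F̄₁(t))]^{1/κ_U}, where F̄₁ is a survival function satisfying F̄₁(t + m(t)x) ~ F̄₁(t)e^{−x} locally uniformly, m is self-neglecting, ℓ is slowly varying at 0, and κ_U > 0. Then V(t + m(t)x) ~ V(t)e^{−x} as t → ∞, locally uniformly in x ∈ ℝ; that is, V ∈ Γ_{−1}(m). -/
open Filter Topology

/-- If `V(t) = F̄₁(t) [ℓ(F̄₁(t))]^{1/κ}` with `F̄₁(t + m(t)x) ~ F̄₁(t) e^{-x}` locally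
uniformly, `m` self-neglecting and `ℓ` slowly varying at `0` (locally uniformly), then
`V(t + m(t)x) ~ V(t) e^{-x}` locally uniformly in `x`; that is, `V ∈ Γ_{-1}(m)`. -/
theorem rapid_variation_stmt10 (Fbar ℓ m : ℝ → ℝ) (κ : ℝ) (hκ : 0 < κ)
    (hF_pos : ∀ t, 0 < Fbar t) (hF_le : ∀ t, Fbar t ≤ 1)
    (hF_cont : Continuous Fbar)
    (hF0 : Tendsto Fbar atTop (𝓝 0))
    (hℓ_pos : ∀ u > 0, 0 < ℓ u)
    (hℓ : ∀ K : Set ℝ, IsCompact K → K ⊆ Set.Ioi 0 →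
      TendstoUniformlyOn (fun u s => ℓ (u * s) / ℓ u) (fun _ => 1) (𝓝[>] (0:ℝ)) K)
    (hm_pos : ∀ t, 0 < m t)
    (hm_sn : ∀ K : Set ℝ, IsCompact K →
      TendstoUniformlyOn (fun t x => m (t + m t * x) / m t) (fun _ => 1) atTop K)
    (hFbar : ∀ K : Set ℝ, IsCompact K →
      TendstoUniformlyOn (fun t x => Fbar (t + m t * x) / Fbar t)
        (fun x => Real.exp (-x)) atTop K) :
    ∀ K : Set ℝ, IsCompact K →
      TendstoUniformlyOn
        (fun t x => (Fbar (t + m t * x) * ℓ (Fbar (t + m t * x)) ^ (1/κ)) /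
          (Fbar t * ℓ (Fbar t) ^ (1/κ)))
        (fun x => Real.exp (-x)) atTop K := by
  intro K hK
  rcases K.eq_empty_or_nonempty with rfl | hne
  · exact tendstoUniformlyOn_empty
  -- min and max of exp(-x) on K
  obtain ⟨x₀, hx₀, hmin⟩ := hK.exists_isMinOn hne
    (Real.continuous_exp.comp continuous_neg).continuousOn
  obtain ⟨x₁, hx₁, hmax⟩ := hK.exists_isMaxOn hne
    (Real.continuous_exp.comp continuous_neg).continuousOn
  set a : ℝ := Real.exp (-x₀) with ha
  set b : ℝ := Real.exp (-x₁) with hb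
  have hapos : 0 < a := Real.exp_pos _
  have hbpos : 0 < b := Real.exp_pos _
  have hamin : ∀ x ∈ K, a ≤ Real.exp (-x) := fun x hx => hmin hx
  have hbmax : ∀ x ∈ K, Real.exp (-x) ≤ b := fun x hx => hmax hx
  -- uniform convergence of the ratio g t x = Fbar(t+m t x)/Fbar t
  have hg := hFbar K hK
  rw [Metric.tendstoUniformlyOn_iff] at hg
  -- the ratio eventually lies in [a/2, b+1]
  have hg_mem : ∀ᶠ t in atTop, ∀ x ∈ K,
      Fbar (t + m t * x) / Fbar t ∈ Set.Icc (a/2) (b+1) := by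
    filter_upwards [hg (min (a/2) 1) (by positivity)] with t ht x hx
    have h1 := ht x hx
    rw [Real.dist_eq] at h1
    obtain ⟨h1l, h1r⟩ := abs_lt.mp h1
    have h2 : min (a/2) 1 ≤ a/2 := min_le_left _ _
    have h3 : min (a/2) 1 ≤ 1 := min_le_right _ _
    have h4 := hamin x hx
    have h5 := hbmax x hx
    exact ⟨by linarith, by linarith⟩
  -- Fbar tends to 0 within (0,∞)
  have hFtend : Tendsto Fbar atTop (𝓝[>] (0:ℝ)) :=
    tendsto_nhdsWithin_iff.mpr ⟨hF0, Eventually.of_forall fun t => hF_pos t⟩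
  have hℓK := hℓ (Set.Icc (a/2) (b+1)) isCompact_Icc
    (fun y hy => lt_of_lt_of_le (by positivity) hy.1)
  rw [Metric.tendstoUniformlyOn_iff] at hℓK
  -- the ℓ-ratio tends to 1 uniformly
  have hl : ∀ δ > (0:ℝ), ∀ᶠ t in atTop, ∀ x ∈ K,
      |ℓ (Fbar (t + m t * x)) / ℓ (Fbar t) - 1| < δ := by
    intro δ hδ
    filter_upwards [hFtend.eventually (hℓK δ hδ), hg_mem] with t ht hmem x hx
    have h2 := ht _ (hmem x hx)
    rw [Real.dist_eq] at h2
    have h3 : Fbar t * (Fbar (t + m t * x) / Fbar t) = Fbar (t + m t * x) := by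
      rw [mul_comm, div_mul_cancel₀ _ (ne_of_gt (hF_pos t))]
    rw [h3] at h2
    rw [abs_sub_comm]
    exact h2
  -- the rpow of the ℓ-ratio tends to 1 uniformly
  have hp : ∀ ε > (0:ℝ), ∀ᶠ t in atTop, ∀ x ∈ K,
      |(ℓ (Fbar (t + m t * x)) / ℓ (Fbar t)) ^ (1/κ) - 1| < ε := by
    intro ε hε
    have hc : ContinuousAt (fun y : ℝ => y ^ (1/κ)) 1 :=
      Real.continuousAt_rpow_const 1 (1/κ) (Or.inl one_ne_zero)
    rw [Metric.continuousAt_iff] at hc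
    obtain ⟨δ, hδ, hδc⟩ := hc ε hε
    filter_upwards [hl δ hδ] with t ht x hx
    have h4 : dist (ℓ (Fbar (t + m t * x)) / ℓ (Fbar t)) 1 < δ := by
      rw [Real.dist_eq]; exact ht x hx
    have h5 := hδc h4
    rw [Real.dist_eq, Real.one_rpow] at h5
    exact h5
  -- combine
  rw [Metric.tendstoUniformlyOn_iff]
  intro ε hε
  have hεb : 0 < ε/(2*(b+1)) := by positivity
  filter_upwards [hg (min (ε/2) 1) (by positivity), hp (ε/(2*(b+1))) hεb]
    with t h1 h2 x hx
  set A := Fbar (t + m t * x) with hA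
  set B := Fbar t with hB
  set g : ℝ := A / B with hgdef
  set p : ℝ := (ℓ A / ℓ B) ^ (1/κ) with hpdef
  have hrw : (A * ℓ A ^ (1/κ)) / (B * ℓ B ^ (1/κ)) = g * p := by
    rw [mul_div_mul_comm, hpdef,
      Real.div_rpow (le_of_lt (hℓ_pos _ (hF_pos _))) (le_of_lt (hℓ_pos _ (hF_pos _)))]
  rw [Real.dist_eq, hrw]
  have h1x := h1 x hx
  rw [Real.dist_eq] at h1x
  have h2x := h2 x hx
  have hgnn : 0 ≤ g := div_nonneg (hF_pos _).le (hF_pos _).le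
  have hgb : g ≤ b + 1 := by
    obtain ⟨h1l, h1r⟩ := abs_lt.mp h1x
    have h5 := hbmax x hx
    have h6 : min (ε/2) 1 ≤ 1 := min_le_right _ _
    linarith
  have key : |g * p - g| ≤ ε/2 := by
    rw [show g * p - g = g * (p - 1) by ring, abs_mul, abs_of_nonneg hgnn]
    calc g * |p - 1| ≤ (b+1) * (ε/(2*(b+1))) :=
          mul_le_mul hgb h2x.le (abs_nonneg _) (by positivity)
      _ = ε/2 := by field_simp
  have tri : |Real.exp (-x) - g * p| ≤ |Real.exp (-x) - g| + |g - g * p| :=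
    abs_sub_le _ _ _
  have habs : |g - g * p| = |g * p - g| := abs_sub_comm _ _
  have h7 : min (ε/2) 1 ≤ ε/2 := min_le_left _ _
  calc |Real.exp (-x) - g * p| ≤ |Real.exp (-x) - g| + |g - g * p| := tri
    _ < ε := by rw [habs]; linarith
end
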